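/- For every ξ = (x∨, t∨) ∈ U∨ × (k^×)^d there is exactly one point y ∈ U × (k^×)^d with Φ(y) = −ξ (i.e. the function R_ξ(y) = R(y) + ⟨y,ξ⟩ has a unique critical point), and this point y satisfies ⟨y,ξ⟩ = 0 and R(y) + ⟨y,ξ⟩ = (−1)^d · R∨(ξ)⁻¹. In particular the unique critical value of R_ξ is (−1)^d · R∨(ξ)⁻¹. (Paper's Lemma 3.5, stated at the level of the explicit gradient formulas.) -/

import Mathlib

open Finset

/-- Lemma 3.5: for every `ξ ∈ U∨ × (k^×)^d` there is exactly one point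
`y ∈ U × (k^×)^d` with `Φ(y) = -ξ` (i.e. `R_ξ(y) = R(y) + ⟨y,ξ⟩` has a unique
critical point), and this point satisfies `⟨y,ξ⟩ = 0` and
`R(y) + ⟨y,ξ⟩ = (-1)^d · R∨(ξ)⁻¹`. -/
theorem lemma3_5_unique_critical_value
    {k : Type*} [Field k] {n d : ℕ} (hn : 1 ≤ n) (hd : 1 ≤ d)
    (U Ud : Set (Fin n → k))
    (f fd : (Fin n → k) → k) (F Fd : (Fin n → k) → (Fin n → k))
    (hUstab : ∀ c : k, c ≠ 0 → ∀ x ∈ U, c • x ∈ U)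
    (hUdstab : ∀ c : k, c ≠ 0 → ∀ ξ ∈ Ud, c • ξ ∈ Ud)
    (hf0 : ∀ x ∈ U, f x ≠ 0) (hfd0 : ∀ ξ ∈ Ud, fd ξ ≠ 0)
    (hFmem : ∀ x ∈ U, F x ∈ Ud) (hFdmem : ∀ ξ ∈ Ud, Fd ξ ∈ U)
    (hFdF : ∀ x ∈ U, Fd (F x) = x) (hFFd : ∀ ξ ∈ Ud, F (Fd ξ) = ξ)
    (hnorm : ∀ x ∈ U, fd (F x) = (f x)⁻¹)
    (hnormd : ∀ ξ ∈ Ud, f (Fd ξ) = (fd ξ)⁻¹)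
    (hfhom : ∀ c : k, c ≠ 0 → ∀ x ∈ U, f (c • x) = c ^ d * f x)
    (hFhom : ∀ c : k, c ≠ 0 → ∀ x ∈ U, F (c • x) = c⁻¹ • F x)
    (hfdhom : ∀ c : k, c ≠ 0 → ∀ ξ ∈ Ud, fd (c • ξ) = c ^ d * fd ξ)
    (hFdhom : ∀ c : k, c ≠ 0 → ∀ ξ ∈ Ud, Fd (c • ξ) = c⁻¹ • Fd ξ)
    (hEuler : ∀ ξ ∈ Ud, ∑ i, Fd ξ i * ξ i = (d : k))
    (R Rd : (Fin n → k) × (Fin d → k) → k)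
    (hR : ∀ x t, R (x, t) = f x / ∏ i, t i)
    (hRd : ∀ ξ t, Rd (ξ, t) = fd ξ / ∏ i, t i)
    (Φ Φd : (Fin n → k) × (Fin d → k) → (Fin n → k) × (Fin d → k))
    (hΦ : ∀ x t, Φ (x, t) = (R (x, t) • F x, fun i => -R (x, t) / t i))
    (hΦd : ∀ ξ t, Φd (ξ, t) = (Rd (ξ, t) • Fd ξ, fun i => -Rd (ξ, t) / t i))
    (pair : (Fin n → k) × (Fin d → k) → (Fin n → k) × (Fin d → k) → k)
    (hpair : ∀ y ξ, pair y ξ = (∑ i, y.1 i * ξ.1 i) + ∑ j, y.2 j * ξ.2 j)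
    (D Dd : Set ((Fin n → k) × (Fin d → k)))
    (hD : D = {y | y.1 ∈ U ∧ ∀ i, y.2 i ≠ 0})
    (hDd : Dd = {ξ | ξ.1 ∈ Ud ∧ ∀ i, ξ.2 i ≠ 0}) :
    ∀ ξ ∈ Dd, (∃! y, y ∈ D ∧ Φ y = -ξ) ∧
      ∀ y, y ∈ D → Φ y = -ξ →
        pair y ξ = 0 ∧ R y + pair y ξ = (-1 : k) ^ d * (Rd ξ)⁻¹ := by
  rintro ⟨xd, td⟩ hξmem
  rw [hDd] at hξmem
  obtain ⟨hxd, htd⟩ := hξmem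
  have hfdx : fd xd ≠ 0 := hfd0 _ hxd
  have hptd : (∏ i, td i) ≠ 0 := Finset.prod_ne_zero_iff.2 fun i _ => htd i
  set r : k := (-1 : k) ^ d * (∏ i, td i) / fd xd with hrdef
  have hr0 : r ≠ 0 := by
    rw [hrdef]
    exact div_ne_zero (mul_ne_zero (pow_ne_zero _ (by norm_num)) hptd) hfdx
  have hnr0 : (-r) ≠ 0 := neg_ne_zero.2 hr0
  have hFdx : Fd xd ∈ U := hFdmem _ hxd
  set x0 : Fin n → k := (-r) • Fd xd with hx0def
  set t0 : Fin d → k := fun i => r / td i with ht0def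
  have hx0U : x0 ∈ U := hUstab _ hnr0 _ hFdx
  have ht00 : ∀ i, t0 i ≠ 0 := fun i => div_ne_zero hr0 (htd i)
  -- generic cancellation
  have cancel : ∀ s : k, s ≠ 0 →
      ((-s) ^ d * (fd xd)⁻¹) / (s ^ d / ∏ i, td i) = r := by
    intro s hs
    rw [neg_pow, hrdef]
    have hsd : s ^ d ≠ 0 := pow_ne_zero _ hs
    field_simp
  have hfx0 : f x0 = (-r) ^ d * (fd xd)⁻¹ := by
    rw [hx0def, hfhom _ hnr0 _ hFdx, hnormd _ hxd]
  have hpt0 : (∏ i, t0 i) = r ^ d / ∏ i, td i := by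
    simp only [ht0def]
    rw [Finset.prod_div_distrib, Finset.prod_const, Finset.card_univ, Fintype.card_fin]
  have hRx0 : R (x0, t0) = r := by
    rw [hR, hfx0, hpt0]
    exact cancel r hr0
  have hΦx0 : Φ (x0, t0) = -(xd, td) := by
    rw [hΦ, hRx0]
    have hFx0 : F x0 = (-r)⁻¹ • xd := by
      rw [hx0def, hFhom _ hnr0 _ hFdx, hFFd _ hxd]
    ext i
    · simp only [hFx0, Prod.fst_neg, Pi.neg_apply, Pi.smul_apply, smul_eq_mul]
      field_simp
    · simp only [Prod.snd_neg, Pi.neg_apply, ht0def]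
      field_simp
  have hmem0 : (x0, t0) ∈ D := by
    rw [hD]; exact ⟨hx0U, ht00⟩
  -- uniqueness
  have huniq : ∀ y, y ∈ D → Φ y = -(xd, td) → y = (x0, t0) := by
    rintro ⟨x, t⟩ hyD hyΦ
    rw [hD] at hyD
    obtain ⟨hxU, ht⟩ := hyD
    change x ∈ U at hxU
    change ∀ i, t i ≠ 0 at ht
    have hpt : (∏ i, t i) ≠ 0 := Finset.prod_ne_zero_iff.2 fun i _ => ht i
    set s : k := R (x, t) with hsdef
    have hs0 : s ≠ 0 := by
      rw [hsdef, hR]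
      exact div_ne_zero (hf0 _ hxU) hpt
    rw [hΦ] at hyΦ
    have h1 : s • F x = -xd := congrArg Prod.fst hyΦ
    have h2 : ∀ i, -s / t i = -(td i) := by
      intro i
      have := congrArg (fun p => p.2 i) hyΦ
      simpa using this
    have hti : ∀ i, t i = s / td i := by
      intro i
      have h2i := h2 i
      rw [neg_div] at h2i
      have h3 : s / t i = td i := neg_injective h2i
      have h4 : s = td i * t i := (div_eq_iff (ht i)).1 h3
      rw [eq_div_iff (htd i), h4]; ring
    have hFx : F x = (-s⁻¹) • xd := by
      have := congrArg (fun v => s⁻¹ • v) h1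
      simp only [smul_smul, inv_mul_cancel₀ hs0, one_smul] at this
      rw [this]
      ext i
      simp [mul_comm]
    have hxval : x = (-s) • Fd xd := by
      have hns : (-s⁻¹ : k) ≠ 0 := neg_ne_zero.2 (inv_ne_zero hs0)
      have h := hFdF x hxU
      rw [hFx, hFdhom _ hns _ hxd] at h
      rw [← h, inv_neg, inv_inv]
    have hfx : f x = (-s) ^ d * (fd xd)⁻¹ := by
      rw [hxval, hfhom _ (neg_ne_zero.2 hs0) _ hFdx, hnormd _ hxd]
    have hptv : (∏ i, t i) = s ^ d / ∏ i, td i := by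
      calc (∏ i, t i) = ∏ i, s / td i := by
            exact Finset.prod_congr rfl fun i _ => hti i
        _ = s ^ d / ∏ i, td i := by
            rw [Finset.prod_div_distrib, Finset.prod_const, Finset.card_univ,
              Fintype.card_fin]
    have hsr : s = r := by
      conv_lhs => rw [hsdef, hR, hfx, hptv]
      exact cancel s hs0
    refine Prod.ext ?_ ?_
    · show x = x0
      rw [hxval, hsr, hx0def]
    · show t = t0
      funext i
      rw [hti i, hsr, ht0def]
  -- final value computations for the canonical point
  have hpair0 : pair (x0, t0) (xd, td) = 0 := by
    rw [hpair]
    have hsum1 : (∑ i, x0 i * xd i) = -r * (d : k) := by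
      have : ∀ i, x0 i * xd i = -r * (Fd xd i * xd i) := by
        intro i
        simp [hx0def, mul_assoc]
      rw [Finset.sum_congr rfl fun i _ => this i, ← Finset.mul_sum, hEuler _ hxd]
    have hsum2 : (∑ j, t0 j * td j) = (d : k) * r := by
      have : ∀ j, t0 j * td j = r := by
        intro j
        show r / td j * td j = r
        exact div_mul_cancel₀ r (htd j)
      rw [Finset.sum_congr rfl fun j _ => this j, Finset.sum_const, Finset.card_univ,
        Fintype.card_fin, nsmul_eq_mul]
    rw [hsum1, hsum2]; ring
  have hval0 : R (x0, t0) + pair (x0, t0) (xd, td) = (-1 : k) ^ d * (Rd (xd, td))⁻¹ := by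
    rw [hRx0, hpair0, hRd, hrdef]
    field_simp
    ring
  refine ⟨⟨(x0, t0), ⟨hmem0, hΦx0⟩, fun y hy => huniq y hy.1 hy.2⟩, ?_⟩
  intro y hyD hyΦ
  rw [huniq y hyD hyΦ]
  exact ⟨hpair0, hval0⟩
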